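/- Every asymptotic 2-coloring c of the plane satisfies p(c) ≥ 1/3. -/

import Mathlib

open MeasureTheory Real

noncomputable section

abbrev Plane := EuclideanSpace ℝ (Fin 2)

def vec (x y : ℝ) : Plane := (WithLp.equiv 2 (Fin 2 → ℝ)).symm ![x, y]

def dir (θ : ℝ) : Plane := vec (Real.cos θ) (Real.sin θ)

/-- The fundamental parallelogram `{t•u + s•v : 0 ≤ t, s < 1}`. -/
def para (u v : Plane) : Set Plane :=
  {x | ∃ t s : ℝ, 0 ≤ t ∧ t < 1 ∧ 0 ≤ s ∧ s < 1 ∧ x = t • u + s • v}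

/-- `p^per(c)` for a periodic coloring with fundamental parallelogram `para u v`. -/
def pper {k : ℕ} (c : Plane → Fin k) (u v : Plane) : ℝ :=
  (1 / (2 * π * (volume (para u v)).toReal)) *
    ∫ a in para u v, ∫ θ in (0:ℝ)..(2*π),
      (if c a = c (a + dir θ) then (1:ℝ) else 0)

/-- The square `[-R, R]²`. -/
def square (R : ℝ) : Set Plane := {x | x 0 ∈ Set.Icc (-R) R ∧ x 1 ∈ Set.Icc (-R) R}

-- `p^table(c)` on the "table" `P`: the conditional probability that both endpoints of a
-- random needle have the same color, given that the second endpoint also lands in `P`.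
open Classical in
def ptableSet {k : ℕ} (c : Plane → Fin k) (P : Set Plane) : ℝ :=
  (∫ a in P, ∫ θ in (0:ℝ)..(2*π),
      (if c a = c (a + dir θ) ∧ a + dir θ ∈ P then (1:ℝ) else 0)) /
  (∫ a in P, ∫ θ in (0:ℝ)..(2*π), (if a + dir θ ∈ P then (1:ℝ) else 0))

/-- `p^table_R(c)`, on the square table `[-R, R]²`. -/
def ptable {k : ℕ} (c : Plane → Fin k) (R : ℝ) : ℝ := ptableSet c (square R)

namespace Aux9

open Set

theorem measurable_dir : Measurable dir :=
  (WithLp.measurable_toLp 2 (Fin 2 → ℝ)).comp (measurable_pi_lambda (fun θ : ℝ => ![Real.cos θ, Real.sin θ])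
                         (by intro i; fin_cases i
                             exacts [Real.continuous_cos.measurable, Real.continuous_sin.measurable]))

theorem dir_periodic (θ : ℝ) : dir (θ + 2*π) = dir θ := by
  unfold dir
  rw [Real.cos_add_two_pi, Real.sin_add_two_pi]

theorem dir_triangle (θ : ℝ) : dir θ + dir (θ + 2*π/3) = dir (θ + π/3) := by
  unfold dir vec
  ext i
  have h2 : Real.cos (2*π/3) = -(1/2) := by
    rw [show (2*π/3 : ℝ) = π - π/3 by ring, Real.cos_pi_sub, Real.cos_pi_div_three]
  have h3 : Real.sin (2*π/3) = Real.sqrt 3 / 2 := by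
    rw [show (2*π/3 : ℝ) = π - π/3 by ring, Real.sin_pi_sub, Real.sin_pi_div_three]
  fin_cases i <;>
    simp [Real.cos_add, Real.sin_add, Real.cos_pi_div_three, Real.sin_pi_div_three, h2, h3] <;>
    ring

theorem measurableSet_square (R : ℝ) : MeasurableSet (square R) :=
  (((measurable_pi_apply 0).comp (WithLp.measurable_ofLp 2 (Fin 2 → ℝ))) measurableSet_Icc).inter (((measurable_pi_apply 1).comp (WithLp.measurable_ofLp 2 (Fin 2 → ℝ))) measurableSet_Icc)

theorem volume_square {R : ℝ} (hR : 0 ≤ R) : volume (square R) = ENNReal.ofReal ((2*R)^2) := by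
  have h : square R = (MeasurableEquiv.toLp 2 (Fin 2 → ℝ)).symm ⁻¹'
      (Set.univ.pi fun _ : Fin 2 => Icc (-R) R) := by
    ext x
    simp only [square, Set.mem_preimage, Set.mem_pi, Set.mem_univ, forall_true_left,
      Fin.forall_fin_two, Set.mem_setOf_eq]
    exact Iff.rfl
  rw [h, MeasurePreserving.measure_preimage (EuclideanSpace.volume_preserving_symm_measurableEquiv_toLp (Fin 2))
    (MeasurableSet.univ_pi fun _ => measurableSet_Icc).nullMeasurableSet, volume_pi_pi]
  simp only [Real.volume_Icc, Finset.prod_const, Finset.card_univ, Fintype.card_fin]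
  rw [show R - -R = 2*R by ring, ← ENNReal.ofReal_pow (by linarith)]

theorem shiftIoc (T : Set ℝ) (hT : MeasurableSet T) (hper : ∀ θ, θ + 2*π ∈ T ↔ θ ∈ T) (s : ℝ) :
    volume {θ ∈ Ioc 0 (2*π) | θ + s ∈ T} = volume (T ∩ Ioc 0 (2*π)) := by
  have h2π : (0:ℝ) < 2*π := by positivity
  have hper' : ∀ (n : ℤ) (x : ℝ), x + n * (2*π) ∈ T ↔ x ∈ T := by
    intro n
    induction n using Int.induction_on with
    | zero => simp
    | succ n ih =>
                 intro x
                 rw [show x + ((n:ℤ)+1:ℤ) * (2*π) = (x + (n:ℤ) * (2*π)) + 2*π by push_cast; ring,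
                   hper]; exact ih x
    | pred n ih =>
                 intro x
                 have := hper (x + (-(n:ℤ)-1:ℤ) * (2*π))
                 rw [show x + (-(n:ℤ)-1:ℤ) * (2*π) + 2*π = x + (-(n:ℤ):ℤ) * (2*π) by push_cast; ring] at this
                 rw [← this, ih]
  have hinv : ∀ g : AddSubgroup.zmultiples (2*π), (fun x : ℝ => (g:ℝ) + x) ⁻¹' T = T := by
    rintro ⟨g, n, rfl⟩
    ext x
    simp only [Set.mem_preimage]
    rw [show ((n • (2*π) : ℝ)) + x = x + n * (2*π) by rw [zsmul_eq_mul]; ring, hper']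
  have key : volume (T ∩ Ioc s (s + 2*π)) = volume (T ∩ Ioc 0 (0 + 2*π)) :=
    (isAddFundamentalDomain_Ioc h2π s (volume : Measure ℝ)).measure_set_eq
      (isAddFundamentalDomain_Ioc h2π 0 (volume : Measure ℝ)) hT hinv
  have hset : {θ ∈ Ioc 0 (2*π) | θ + s ∈ T} = (fun θ : ℝ => θ + s) ⁻¹' (T ∩ Ioc s (s + 2*π)) := by
    ext θ
    simp only [Set.mem_setOf_eq, Set.mem_preimage, Set.mem_inter_iff, Set.mem_Ioc]
    constructor
    · rintro ⟨⟨h1, h2⟩, h3⟩; exact ⟨h3, by linarith, by linarith⟩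
    · rintro ⟨h3, h1, h2⟩; exact ⟨⟨by linarith, by linarith⟩, h3⟩
  rw [hset, measure_preimage_add_right, key, zero_add]

theorem doubleInt (P : Set Plane) (S : Set (Plane × ℝ)) (hS : MeasurableSet S) :
    (∫ a in P, ∫ θ in (0:ℝ)..(2*π), S.indicator (fun _ => (1:ℝ)) (a, θ)) =
      (((volume.restrict P).prod (volume.restrict (Ioc 0 (2*π)))) S).toReal := by
  have h2π : (0:ℝ) ≤ 2*π := by positivity
  have hinner : ∀ a : Plane, (∫ θ in (0:ℝ)..(2*π), S.indicator (fun _ => (1:ℝ)) (a, θ)) =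
      ((volume.restrict (Ioc 0 (2*π))) (Prod.mk a ⁻¹' S)).toReal := by
    intro a
    rw [intervalIntegral.integral_of_le h2π]
    have : ∀ θ : ℝ, S.indicator (fun _ => (1:ℝ)) (a, θ) = (Prod.mk a ⁻¹' S).indicator 1 θ := by
      intro θ
      by_cases h : (a, θ) ∈ S <;> simp [h, Set.indicator]
    simp_rw [this]
    exact integral_indicator_one (measurable_prodMk_left hS)
  simp_rw [hinner]
  rw [integral_toReal]
  · rw [Measure.prod_apply hS]
  · exact (measurable_measure_prodMk_left hS).aemeasurable
  · refine ae_of_all _ fun a => ?_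
    exact lt_of_le_of_lt (measure_mono (Set.subset_univ _))
      (by rw [Measure.restrict_apply_univ]; exact measure_Ioc_lt_top)

def SN (c : Plane → Fin 2) (R : ℝ) : Set (Plane × ℝ) :=
  {p | c p.1 = c (p.1 + dir p.2) ∧ p.1 + dir p.2 ∈ square R}
def SNs (c : Plane → Fin 2) (R s : ℝ) : Set (Plane × ℝ) :=
  {p | c p.1 = c (p.1 + dir (p.2 + s)) ∧ p.1 + dir (p.2 + s) ∈ square R}
def SD (R : ℝ) : Set (Plane × ℝ) := {p | p.1 + dir p.2 ∈ square R}
def SB (R : ℝ) : Set (Plane × ℝ) :=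
  {p | p.1 + dir p.2 ∈ square R ∧ p.1 + dir (p.2 + π/3) ∈ square R}
def S3 (c : Plane → Fin 2) (R : ℝ) : Set (Plane × ℝ) :=
  {p | c (p.1 + dir p.2) = c (p.1 + dir (p.2 + π/3)) ∧
       p.1 + dir p.2 ∈ square R ∧ p.1 + dir (p.2 + π/3) ∈ square R}
def meas (R : ℝ) : Measure (Plane × ℝ) :=
  (volume.restrict (square R)).prod (volume.restrict (Ioc 0 (2*π)))

theorem measurable_f1 : Measurable fun p : Plane × ℝ => p.1 + dir p.2 :=
  measurable_fst.add (measurable_dir.comp measurable_snd)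
theorem measurable_fs (s : ℝ) : Measurable fun p : Plane × ℝ => p.1 + dir (p.2 + s) :=
  measurable_fst.add (measurable_dir.comp (measurable_snd.add_const s))

theorem measurableSet_SN (c : Plane → Fin 2) (hc : Measurable c) (R : ℝ) :
    MeasurableSet (SN c R) :=
  (measurableSet_eq_fun (hc.comp measurable_fst) (hc.comp measurable_f1)).inter
    (measurable_f1 (measurableSet_square R))
theorem measurableSet_SNs (c : Plane → Fin 2) (hc : Measurable c) (R s : ℝ) :
    MeasurableSet (SNs c R s) :=
  (measurableSet_eq_fun (hc.comp measurable_fst) (hc.comp (measurable_fs s))).inter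
    ((measurable_fs s) (measurableSet_square R))
theorem measurableSet_SD (R : ℝ) : MeasurableSet (SD R) :=
  measurable_f1 (measurableSet_square R)
theorem measurableSet_SB (R : ℝ) : MeasurableSet (SB R) :=
  (measurable_f1 (measurableSet_square R)).inter ((measurable_fs (π/3)) (measurableSet_square R))
theorem measurableSet_S3 (c : Plane → Fin 2) (hc : Measurable c) (R : ℝ) :
    MeasurableSet (S3 c R) :=
  (measurableSet_eq_fun (hc.comp measurable_f1) (hc.comp (measurable_fs (π/3)))).inter
    ((measurable_f1 (measurableSet_square R)).inter ((measurable_fs (π/3)) (measurableSet_square R)))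

/-- the θ-shift invariance -/
theorem meas_SNs (c : Plane → Fin 2) (hc : Measurable c) (R s : ℝ) :
    meas R (SNs c R s) = meas R (SN c R) := by
  rw [meas, Measure.prod_apply (measurableSet_SNs c hc R s),
    Measure.prod_apply (measurableSet_SN c hc R)]
  refine lintegral_congr fun a => ?_
  set T : Set ℝ := {φ | c a = c (a + dir φ) ∧ a + dir φ ∈ square R} with hTdef
  have hmap : Measurable fun φ : ℝ => a + dir φ := measurable_dir.const_add a
  have hT : MeasurableSet T := by
    exact (measurableSet_eq_fun measurable_const (hc.comp hmap)).inter
      (hmap (measurableSet_square R))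
  have hper : ∀ φ : ℝ, φ + 2*π ∈ T ↔ φ ∈ T := by
    intro φ; simp [hTdef, dir_periodic]
  rw [Measure.restrict_apply' measurableSet_Ioc, Measure.restrict_apply' measurableSet_Ioc]
  have e1 : (Prod.mk a ⁻¹' SNs c R s) ∩ Ioc 0 (2*π) = {θ ∈ Ioc 0 (2*π) | θ + s ∈ T} := by
    ext θ; simp [SNs, hTdef, and_comm]
  have e2 : (Prod.mk a ⁻¹' SN c R) ∩ Ioc 0 (2*π) = T ∩ Ioc 0 (2*π) := by
    ext θ; simp [SN, hTdef]
  rw [e1, e2, shiftIoc T hT hper s]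

theorem meas_S3_le (c : Plane → Fin 2) (hc : Measurable c) (R : ℝ) :
    meas R (S3 c R) ≤ meas R (SNs c R (2*π/3)) := by
  rw [meas, Measure.prod_apply_symm (measurableSet_S3 c hc R),
    Measure.prod_apply_symm (measurableSet_SNs c hc R (2*π/3))]
  refine lintegral_mono fun θ => ?_
  have hrw : ∀ a : Plane, a + dir (θ + π/3) = (a + dir θ) + dir (θ + 2*π/3) := by
    intro a; rw [← dir_triangle θ, add_assoc]
  set W' : Set Plane := {b | c b = c (b + dir (θ + 2*π/3)) ∧ b + dir (θ + 2*π/3) ∈ square R}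
    with hW'def
  have e1 : ((fun x => (x, θ)) ⁻¹' S3 c R) = (fun a : Plane => a + dir θ) ⁻¹' (W' ∩ square R) := by
    ext a
    simp only [S3, Set.mem_preimage, Set.mem_setOf_eq, Set.mem_inter_iff, hW'def, hrw a]
    tauto
  have e2 : ((fun x => (x, θ)) ⁻¹' SNs c R (2*π/3)) = W' := by
    ext a; simp [SNs, hW'def]
  rw [e1, e2, Measure.restrict_apply' (measurableSet_square R),
    Measure.restrict_apply' (measurableSet_square R)]
  calc volume ((fun a : Plane => a + dir θ) ⁻¹' (W' ∩ square R) ∩ square R)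
      ≤ volume ((fun a : Plane => a + dir θ) ⁻¹' (W' ∩ square R)) :=
        measure_mono Set.inter_subset_left
    _ = volume (W' ∩ square R) := measure_preimage_add_right volume (dir θ) _
    _ ≤ volume (W' ∩ square R) := le_rfl



theorem meas_SB_ge {R : ℝ} (hR : 1 ≤ R) :
    ENNReal.ofReal ((2*(R-1))^2) * ENNReal.ofReal (2*π) ≤ meas R (SB R) := by
  have hsub : (square (R-1)) ×ˢ (univ : Set ℝ) ⊆ SB R := by
    rintro ⟨a, θ⟩ ⟨ha, -⟩
    obtain ⟨⟨h1, h2⟩, h3, h4⟩ := ha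
    have key : ∀ φ : ℝ, a + dir φ ∈ square R := by
      intro φ
      have e0 : (a + dir φ) 0 = a 0 + Real.cos φ := rfl
      have e1 : (a + dir φ) 1 = a 1 + Real.sin φ := rfl
      have c1 := Real.neg_one_le_cos φ
      have c2 := Real.cos_le_one φ
      have s1 := Real.neg_one_le_sin φ
      have s2 := Real.sin_le_one φ
      refine ⟨⟨?_, ?_⟩, ?_, ?_⟩ <;> first
        | (rw [e0]; linarith)
        | (rw [e1]; linarith)
    exact ⟨key θ, key (θ + π/3)⟩
  calc ENNReal.ofReal ((2*(R-1))^2) * ENNReal.ofReal (2*π)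
      = meas R ((square (R-1)) ×ˢ (univ : Set ℝ)) := by
        rw [meas, Measure.prod_prod, Measure.restrict_apply' (measurableSet_square R),
          Set.inter_eq_left.2 (fun x hx => ?_), Measure.restrict_apply_univ,
          volume_square (by linarith : (0:ℝ) ≤ R - 1), Real.volume_Ioc, sub_zero]
        obtain ⟨⟨h1, h2⟩, h3, h4⟩ := hx
        exact ⟨⟨by linarith, by linarith⟩, by linarith, by linarith⟩
    _ ≤ meas R (SB R) := measure_mono hsub

theorem meas_SD_le {R : ℝ} (hR : 0 ≤ R) :
    meas R (SD R) ≤ ENNReal.ofReal ((2*R)^2) * ENNReal.ofReal (2*π) := by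
  calc meas R (SD R) ≤ meas R Set.univ := measure_mono (Set.subset_univ _)
    _ = _ := by
        rw [← Set.univ_prod_univ, meas, Measure.prod_prod, Measure.restrict_apply_univ,
          Measure.restrict_apply_univ, volume_square hR, Real.volume_Ioc, sub_zero]

theorem SB_subset (c : Plane → Fin 2) (R : ℝ) :
    SB R ⊆ SN c R ∪ SNs c R (π/3) ∪ S3 c R := by
  rintro ⟨a, θ⟩ ⟨h1, h2⟩
  have tri : c a = c (a + dir θ) ∨ c a = c (a + dir (θ + π/3)) ∨
      c (a + dir θ) = c (a + dir (θ + π/3)) := by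
    have e1 := (c a).isLt
    have e2 := (c (a + dir θ)).isLt
    have e3 := (c (a + dir (θ + π/3))).isLt
    have : (c a).val = (c (a + dir θ)).val ∨ (c a).val = (c (a + dir (θ + π/3))).val ∨
        (c (a + dir θ)).val = (c (a + dir (θ + π/3))).val := by omega
    rcases this with h | h | h
    · exact Or.inl (Fin.ext h)
    · exact Or.inr (Or.inl (Fin.ext h))
    · exact Or.inr (Or.inr (Fin.ext h))
  rcases tri with h | h | h
  · exact Or.inl (Or.inl ⟨h, h1⟩)
  · exact Or.inl (Or.inr ⟨h, h2⟩)
  · exact Or.inr ⟨h, h1, h2⟩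

open Classical in
theorem ptable_lower (c : Plane → Fin 2) (hc : Measurable c) {R : ℝ} (hR : 1 < R) :
    (R-1)^2/(3*R^2) ≤ ptable c R := by
  have hR0 : (0:ℝ) < R := by linarith
  have hQfin : volume (square R) ≠ ⊤ := by
    rw [volume_square hR0.le]; exact ENNReal.ofReal_ne_top
  haveI : IsFiniteMeasure (volume.restrict (square R)) :=
    ⟨by rw [Measure.restrict_apply_univ]; exact hQfin.lt_top⟩
  haveI : IsFiniteMeasure (meas R) := by unfold meas; infer_instance
  have hfin : ∀ S : Set (Plane × ℝ), meas R S ≠ ⊤ := fun S => (measure_lt_top (meas R) S).ne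
  -- rewrite numerator and denominator
  have hnum : (∫ a in square R, ∫ θ in (0:ℝ)..(2*π),
      (if c a = c (a + dir θ) ∧ a + dir θ ∈ square R then (1:ℝ) else 0)) =
      (meas R (SN c R)).toReal := by
    rw [show (fun a => ∫ θ in (0:ℝ)..(2*π),
        (if c a = c (a + dir θ) ∧ a + dir θ ∈ square R then (1:ℝ) else 0)) =
        fun a => ∫ θ in (0:ℝ)..(2*π), (SN c R).indicator (fun _ => (1:ℝ)) (a, θ) from
      funext fun a => intervalIntegral.integral_congr fun θ _ => by
        by_cases h : c a = c (a + dir θ) ∧ a + dir θ ∈ square R <;>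
          simp [SN, Set.indicator_apply, Set.mem_setOf_eq, h]]
    exact doubleInt (square R) (SN c R) (measurableSet_SN c hc R)
  have hden : (∫ a in square R, ∫ θ in (0:ℝ)..(2*π),
      (if a + dir θ ∈ square R then (1:ℝ) else 0)) = (meas R (SD R)).toReal := by
    rw [show (fun a => ∫ θ in (0:ℝ)..(2*π),
        (if a + dir θ ∈ square R then (1:ℝ) else 0)) =
        fun a => ∫ θ in (0:ℝ)..(2*π), (SD R).indicator (fun _ => (1:ℝ)) (a, θ) from
      funext fun a => intervalIntegral.integral_congr fun θ _ => by
        by_cases h : a + dir θ ∈ square R <;>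
          simp [SD, Set.indicator_apply, Set.mem_setOf_eq, h]]
    exact doubleInt (square R) (SD R) (measurableSet_SD R)
  have hgoal : ptable c R =
      (meas R (SN c R)).toReal / (meas R (SD R)).toReal := by
    unfold ptable ptableSet
    rw [hnum, hden]
  rw [hgoal]
  set n := (meas R (SN c R)).toReal with hn
  set d := (meas R (SD R)).toReal with hd
  set b := (meas R (SB R)).toReal with hb
  -- ENNReal chain
  have hEB : meas R (SB R) ≤ 3 * meas R (SN c R) := by
    calc meas R (SB R) ≤ meas R (SN c R ∪ SNs c R (π/3) ∪ S3 c R) :=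
          measure_mono (SB_subset c R)
      _ ≤ meas R (SN c R ∪ SNs c R (π/3)) + meas R (S3 c R) := measure_union_le _ _
      _ ≤ (meas R (SN c R) + meas R (SNs c R (π/3))) + meas R (S3 c R) :=
          add_le_add_left (measure_union_le _ _) _
      _ ≤ (meas R (SN c R) + meas R (SN c R)) + meas R (SN c R) := by
          rw [meas_SNs c hc R (π/3)]
          exact add_le_add_right ((meas_S3_le c hc R).trans_eq (meas_SNs c hc R (2*π/3))) _
      _ = 3 * meas R (SN c R) := by ring
  have hb3n : b ≤ 3 * n := by
    have h := ENNReal.toReal_mono (by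
        exact ENNReal.mul_ne_top (by norm_num) (hfin _)) hEB
    rwa [ENNReal.toReal_mul, ENNReal.toReal_ofNat] at h
  have hbl : (2*(R-1))^2 * (2*π) ≤ b := by
    have h := ENNReal.toReal_mono (hfin _) (meas_SB_ge hR.le)
    rwa [ENNReal.toReal_mul, ENNReal.toReal_ofReal (by positivity),
      ENNReal.toReal_ofReal (by positivity)] at h
  have hdu : d ≤ (2*R)^2 * (2*π) := by
    have h := ENNReal.toReal_mono (ENNReal.mul_ne_top ENNReal.ofReal_ne_top
      ENNReal.ofReal_ne_top) (meas_SD_le hR0.le)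
    rwa [ENNReal.toReal_mul, ENNReal.toReal_ofReal (by positivity),
      ENNReal.toReal_ofReal (by positivity)] at h
  have hbd : b ≤ d := ENNReal.toReal_mono (hfin _) (measure_mono fun p hp => hp.1)
  have hd0 : (0:ℝ) < d := by
    have h1 : (0:ℝ) < (2*(R-1))^2 * (2*π) := by
      have : (0:ℝ) < R - 1 := by linarith
      positivity
    linarith
  rw [div_le_div_iff₀ (by positivity) hd0]
  nlinarith [mul_le_mul_of_nonneg_left hdu (sq_nonneg (R-1)),
    mul_le_mul_of_nonneg_right hb3n (sq_nonneg R),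
    mul_le_mul_of_nonneg_right hbl (sq_nonneg R), Real.pi_pos]

end Aux9

/-- Every asymptotic 2-coloring of the plane satisfies `p(c) ≥ 1/3`. -/
theorem stmt9 (c : Plane → Fin 2) (hc : Measurable c) (p : ℝ)
    (hp : Filter.Tendsto (fun R : ℝ => ptable c R) Filter.atTop (nhds p)) :
    1 / 3 ≤ p := by
  have hev : (fun R : ℝ => (R-1)^2/(3*R^2)) ≤ᶠ[Filter.atTop] fun R : ℝ => ptable c R :=
    Filter.eventually_atTop.2 ⟨2, fun R hR => Aux9.ptable_lower c hc (by linarith)⟩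
  have h1 : Filter.Tendsto (fun R : ℝ => (1 - R⁻¹)^2/3) Filter.atTop (nhds (1/3)) := by
    have h : Filter.Tendsto (fun R : ℝ => ((1:ℝ) - R⁻¹)^2) Filter.atTop (nhds (((1:ℝ) - 0)^2)) :=
      (tendsto_const_nhds.sub tendsto_inv_atTop_zero).pow 2
    simpa using h.div_const (3:ℝ)
  have hlim : Filter.Tendsto (fun R : ℝ => (R-1)^2/(3*R^2)) Filter.atTop (nhds (1/3)) := by
    refine h1.congr' ?_
    filter_upwards [Filter.eventually_gt_atTop (0:ℝ)] with R hR0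
    show (1 - R⁻¹)^2/3 = (R-1)^2/(3*R^2)
    rw [show (1:ℝ) - R⁻¹ = (R-1)/R by field_simp, div_pow, div_div]
    ring_nf
  exact le_of_tendsto_of_tendsto hlim hp hev

end
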